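/- arXiv:2105.04803 — 3 statements merged into one kernel-verified Lean document; each statement's English description precedes it below -/
import Mathlib

section
/- Let e(g) = Σ_{i=0}^{s} t_i·2^{t_i−1} + Σ_{i=0}^{s} i·2^{t_i} where g = Σ_{i=0}^{s} 2^{t_i} is the binary expansion (t_0 > ... > t_s ≥ 0). If g ≤ 2^{n−2}, then (n−2)·g − 2·e(g) ≥ 0. -/
def expList (g : ℕ) : List ℕ :=
  (((Finset.range (g + 1)).filter (fun k => g.testBit k)).sort (· ≤ ·)).reverse

def eHL (g : ℕ) : ℕ :=
  ((expList g).zipIdx.map (fun p => p.1 * 2 ^ (p.1 - 1) + p.2 * 2 ^ p.1)).sum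

lemma testBit_pow_add (t r k : ℕ) (hr : r < 2 ^ t) :
    (2 ^ t + r).testBit k = if k = t then true else r.testBit k := by
  rcases lt_trichotomy k t with hk | hk | hk
  · rw [if_neg hk.ne, Nat.testBit_eq_decide_div_mod_eq, Nat.testBit_eq_decide_div_mod_eq]
    have hsplit : 2 ^ t = 2 ^ k * 2 ^ (t - k) := by
      rw [← pow_add]; congr 1; omega
    have h1 : (2 ^ t + r) / 2 ^ k = r / 2 ^ k + 2 ^ (t - k) := by
      rw [add_comm (2 ^ t) r, hsplit,
        Nat.add_mul_div_left r _ (Nat.two_pow_pos k)]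
    rw [h1]
    have h2 : 2 ^ (t - k) % 2 = 0 := by
      have he : 2 ^ (t - k) = 2 * 2 ^ (t - k - 1) := by
        rw [← pow_succ']; congr 1; omega
      omega
    rw [Nat.add_mod, h2, add_zero]
    have hmm : r / 2 ^ k % 2 % 2 = r / 2 ^ k % 2 := Nat.mod_mod_of_dvd _ dvd_rfl
    rw [hmm]
  · subst hk
    rw [if_pos rfl, Nat.testBit_eq_decide_div_mod_eq]
    have : (2 ^ k + r) / 2 ^ k = 1 + r / 2 ^ k := by
      rw [add_comm (2 ^ k) r, Nat.add_div_right _ (Nat.two_pow_pos k)]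
      omega
    rw [this, Nat.div_eq_of_lt hr]
    simp
  · rw [if_neg hk.ne']
    rw [Nat.testBit_lt_two_pow, Nat.testBit_lt_two_pow]
    · exact lt_of_lt_of_le hr (Nat.pow_le_pow_right (by norm_num) hk.le)
    · have : 2 ^ t + r < 2 ^ (t + 1) := by
        rw [pow_succ]; omega
      exact lt_of_lt_of_le this (Nat.pow_le_pow_right (by norm_num) hk)

lemma testBit_mem_range (g k : ℕ) (h : g.testBit k = true) : k < g + 1 := by
  have := Nat.ge_two_pow_of_testBit h
  have := Nat.lt_two_pow_self (n := k)
  omega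

lemma filter_eq (t r : ℕ) (hr : r < 2 ^ t) :
    ((Finset.range (2 ^ t + r + 1)).filter (fun k => (2 ^ t + r).testBit k))
      = insert t ((Finset.range (r + 1)).filter (fun k => r.testBit k)) := by
  ext k
  simp only [Finset.mem_filter, Finset.mem_range, Finset.mem_insert]
  constructor
  · rintro ⟨-, hb⟩
    rw [testBit_pow_add t r k hr] at hb
    by_cases hk : k = t
    · exact Or.inl hk
    · rw [if_neg hk] at hb
      exact Or.inr ⟨testBit_mem_range r k hb, hb⟩
  · rintro (rfl | ⟨-, hb⟩)
    · refine ⟨?_, by rw [testBit_pow_add k r k hr]; simp⟩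
      have := Nat.lt_two_pow_self (n := k)
      omega
    · have hkt : k ≠ t := by
        rintro rfl
        have := Nat.ge_two_pow_of_testBit hb
        omega
      refine ⟨?_, by rw [testBit_pow_add t r k hr, if_neg hkt]; exact hb⟩
      have := Nat.ge_two_pow_of_testBit hb
      have := Nat.lt_two_pow_self (n := k)
      omega

lemma expList_pow_add (t r : ℕ) (hr : r < 2 ^ t) :
    expList (2 ^ t + r) = t :: expList r := by
  unfold expList
  rw [filter_eq t r hr]
  have hnm : t ∉ (Finset.range (r + 1)).filter (fun k => r.testBit k) := by
    simp only [Finset.mem_filter, Finset.mem_range, not_and]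
    intro _ hb
    have := Nat.ge_two_pow_of_testBit hb
    omega
  have key : ((insert t ((Finset.range (r + 1)).filter (fun k => r.testBit k))).sort (· ≤ ·))
      = (((Finset.range (r + 1)).filter (fun k => r.testBit k)).sort (· ≤ ·)) ++ [t] := by
    refine (fun hp h1 h2 => List.Perm.eq_of_pairwise' (r := (· ≤ · : ℕ → ℕ → Prop)) h1 h2 hp) ?_ ?_ ?_
    · refine (Finset.sort_perm_toList (r := (· ≤ ·)) (s := _)).trans ?_
      refine (Finset.toList_insert hnm).trans ?_
      refine ((List.perm_append_singleton t _).symm.trans ?_).symm.symm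
      exact (List.perm_append_right_iff _).mpr
        (Finset.sort_perm_toList (r := (· ≤ ·)) (s := _)).symm
    · exact Finset.pairwise_sort _ _
    · rw [List.pairwise_append]
      refine ⟨Finset.pairwise_sort _ _, List.pairwise_singleton _ t, ?_⟩
      intro b hb c hc
      rw [List.mem_singleton] at hc
      rw [hc]
      rw [Finset.mem_sort] at hb
      simp only [Finset.mem_filter] at hb
      have h2b : 2 ^ b ≤ r := Nat.ge_two_pow_of_testBit hb.2
      have hbt : (2:ℕ) ^ b < 2 ^ t := by omega
      exact ((Nat.pow_lt_pow_iff_right (by norm_num)).mp hbt).le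
  rw [key, List.reverse_append]
  rfl

lemma expList_zero : expList 0 = [] := by
  simp [expList, Nat.zero_testBit]

lemma eHL_zero : eHL 0 = 0 := by
  simp [eHL, expList_zero]

lemma sum_pow_expList : ∀ g : ℕ, ((expList g).map (fun k => 2 ^ k)).sum = g := by
  intro g
  induction g using Nat.strong_induction_on with
  | _ g ih =>
    rcases Nat.eq_zero_or_pos g with rfl | hg
    · rw [expList_zero]; rfl
    · have h1 : 2 ^ Nat.log2 g ≤ g := Nat.log2_self_le hg.ne'
      have h2 : g < 2 ^ (Nat.log2 g + 1) := Nat.lt_log2_self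
      have hdecomp : g = 2 ^ Nat.log2 g + (g - 2 ^ Nat.log2 g) := by omega
      have hr : g - 2 ^ Nat.log2 g < 2 ^ Nat.log2 g := by rw [pow_succ] at h2; omega
      rw [hdecomp, expList_pow_add _ _ hr, List.map_cons, List.sum_cons,
        ih _ (by have := Nat.two_pow_pos (Nat.log2 g); omega)]

lemma sum_enumFrom (L : List ℕ) (n : ℕ) :
    ((L.zipIdx n).map (fun p => p.1 * 2 ^ (p.1 - 1) + p.2 * 2 ^ p.1)).sum
      = ((L.zipIdx 0).map (fun p => p.1 * 2 ^ (p.1 - 1) + p.2 * 2 ^ p.1)).sum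
        + n * (L.map (fun k => 2 ^ k)).sum := by
  induction L generalizing n with
  | nil => simp
  | cons a L ih =>
    simp only [List.zipIdx_cons, List.map_cons, List.sum_cons, ih (n + 1), ih 1]
    ring

lemma eHL_pow_add (t r : ℕ) (hr : r < 2 ^ t) :
    eHL (2 ^ t + r) = t * 2 ^ (t - 1) + r + eHL r := by
  unfold eHL
  rw [expList_pow_add t r hr, List.zipIdx_cons, List.map_cons, List.sum_cons,
    sum_enumFrom, sum_pow_expList]
  ring

lemma two_mul_term (t : ℕ) : 2 * (t * 2 ^ (t - 1)) = t * 2 ^ t := by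
  cases t with
  | zero => simp
  | succ t => rw [pow_succ']; simp; ring

theorem eHL_le_regular_bound (n g : ℕ) (h : g ≤ 2 ^ (n - 2)) :
    2 * eHL g ≤ (n - 2) * g := by
  set m := n - 2 with hm
  clear_value m
  clear hm
  induction g using Nat.strong_induction_on generalizing m with
  | _ g ih =>
    rcases Nat.eq_zero_or_pos g with rfl | hg
    · simp [eHL_zero]
    · have h1 : 2 ^ Nat.log2 g ≤ g := Nat.log2_self_le hg.ne'
      have h2 : g < 2 ^ (Nat.log2 g + 1) := Nat.lt_log2_self
      obtain ⟨t, ht⟩ : ∃ t, Nat.log2 g = t := ⟨_, rfl⟩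
      rw [ht] at h1 h2
      have hdecomp : g = 2 ^ t + (g - 2 ^ t) := by omega
      obtain ⟨r, hrdef⟩ : ∃ r, g - 2 ^ t = r := ⟨_, rfl⟩
      rw [hrdef] at hdecomp
      have hr : r < 2 ^ t := by rw [pow_succ] at h2; omega
      have htm : t ≤ m := by
        have : 2 ^ t ≤ 2 ^ m := le_trans h1 h
        exact (Nat.pow_le_pow_iff_right (by norm_num)).mp this
      have hrpos : 0 < 2 ^ t := Nat.two_pow_pos t
      have hrec : eHL g = t * 2 ^ (t - 1) + r + eHL r := by
        rw [hdecomp]; exact eHL_pow_add t r hr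
      have hkey := two_mul_term t
      rcases eq_or_lt_of_le htm with rfl | htm'
      · have hr0 : r = 0 := by omega
        have hg2 : g = 2 ^ t := by omega
        rw [hrec, hr0, hg2, eHL_zero]
        omega
      · have ihr : 2 * eHL r ≤ t * r := ih r (by omega) t hr.le
        rw [hrec, hdecomp]
        have hexp : 2 * (t * 2 ^ (t - 1) + r + eHL r) = t * 2 ^ t + 2 * r + 2 * eHL r := by
          omega
        rw [hexp]
        have hbound : t * 2 ^ t + 2 * r + t * r ≤ (t + 1) * (2 ^ t + r) := by
          have hx : (t + 1) * (2 ^ t + r) = t * 2 ^ t + 2 ^ t + t * r + r := by ring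
          omega
        calc t * 2 ^ t + 2 * r + 2 * eHL r ≤ t * 2 ^ t + 2 * r + t * r := by omega
          _ ≤ (t + 1) * (2 ^ t + r) := hbound
          _ ≤ m * (2 ^ t + r) := Nat.mul_le_mul_right _ (by omega)
end

section
/- Let e(g) = Σ_{i=0}^{s} t_i·2^{t_i−1} + Σ_{i=0}^{s} i·2^{t_i} where g = Σ_{i=0}^{s} 2^{t_i} is the binary expansion with t_0 > t_1 > ... > t_s ≥ 0. Then e(g+1) = e(g) + s + 1; that is, e increases by exactly the number of 1-bits of g when passing from g to g+1. -/
lemma mem_expList {g k : ℕ} : k ∈ expList g ↔ g.testBit k = true := by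
  simp only [expList, List.mem_reverse, Finset.mem_sort, Finset.mem_filter, Finset.mem_range]
  constructor
  · rintro ⟨_, h⟩; exact h
  · intro h
    refine ⟨?_, h⟩
    have h1 := Nat.ge_two_pow_of_testBit h
    have h2 := Nat.lt_two_pow_self (n := k)
    omega

lemma expList_sorted (g : ℕ) : (expList g).Pairwise (· > ·) := by
  unfold expList
  rw [List.pairwise_reverse]
  exact List.sortedLT_iff_pairwise.mp (Finset.sortedLT_sort _)

lemma expList_eq (g : ℕ) (M : List ℕ) (hs : M.Pairwise (· > ·))
    (hm : ∀ k, k ∈ M ↔ g.testBit k = true) : expList g = M := by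
  haveI : Std.Antisymm (· > · : ℕ → ℕ → Prop) := ⟨fun a b h1 h2 => absurd h1 (asymm h2)⟩
  have hnd1 : (expList g).Nodup := by
    unfold expList
    exact List.nodup_reverse.mpr (Finset.sort_nodup _ _)
  have hnd2 : M.Nodup := hs.imp (fun h => ne_of_gt h)
  refine List.Perm.eq_of_pairwise'
    (expList_sorted g) hs (List.perm_of_nodup_nodup_toFinset_eq hnd1 hnd2 ?_)
  ext k
  simp [mem_expList, hm]

lemma expList_two_mul (g : ℕ) : expList (2 * g) = (expList g).map (· + 1) := by
  refine expList_eq _ _ ?_ ?_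
  · exact List.Pairwise.map _ (fun a b h => Nat.succ_lt_succ h) (expList_sorted g)
  · intro k
    cases k with
    | zero =>
      simp only [List.mem_map]
      constructor
      · rintro ⟨t, _, ht⟩; omega
      · intro h
        simp only [Nat.testBit_zero, decide_eq_true_eq] at h
        omega
    | succ k =>
      rw [Nat.testBit_succ]
      have : 2 * g / 2 = g := by omega
      rw [this]
      simp only [List.mem_map, ← mem_expList]
      constructor
      · rintro ⟨t, ht, h⟩
        obtain rfl : t = k := by omega
        exact ht
      · intro h; exact ⟨k, h, rfl⟩

lemma expList_two_mul_add_one (g : ℕ) :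
    expList (2 * g + 1) = (expList g).map (· + 1) ++ [0] := by
  refine expList_eq _ _ ?_ ?_
  · rw [List.pairwise_append]
    refine ⟨List.Pairwise.map _ (fun a b h => Nat.succ_lt_succ h) (expList_sorted g),
      List.pairwise_singleton _ _, ?_⟩
    intro a ha b hb
    simp only [List.mem_map] at ha
    simp only [List.mem_singleton] at hb
    obtain ⟨t, _, rfl⟩ := ha
    omega
  · intro k
    cases k with
    | zero =>
      simp [Nat.testBit_zero]
    | succ k =>
      rw [Nat.testBit_succ]
      have : (2 * g + 1) / 2 = g := by omega
      rw [this]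
      simp only [List.mem_append, List.mem_map, List.mem_singleton, ← mem_expList]
      constructor
      · rintro (⟨t, ht, h⟩ | h)
        · obtain rfl : t = k := by omega
          exact ht
        · omega
      · intro h; exact Or.inl ⟨k, h, rfl⟩

/-- Auxiliary sum: `eAux i L = Σ_j (L_j * 2^(L_j - 1) + (i+j) * 2^(L_j))`. -/
def eAux : ℕ → List ℕ → ℕ
  | _, [] => 0
  | i, t :: L => t * 2 ^ (t - 1) + i * 2 ^ t + eAux (i + 1) L

lemma enumFrom_sum (L : List ℕ) : ∀ i : ℕ,
    ((L.zipIdx i).map (fun p => p.1 * 2 ^ (p.1 - 1) + p.2 * 2 ^ p.1)).sum = eAux i L := by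
  induction L with
  | nil => intro i; rfl
  | cons t L ih =>
    intro i
    simp only [List.zipIdx_cons, List.map_cons, List.sum_cons, ih, eAux]

lemma eHL_eq_eAux (g : ℕ) : eHL g = eAux 0 (expList g) := by
  rw [eHL, enumFrom_sum]

lemma eAux_map_succ (L : List ℕ) : ∀ i : ℕ,
    eAux i (L.map (· + 1)) = 2 * eAux i L + (L.map (2 ^ ·)).sum := by
  induction L with
  | nil => intro i; simp [eAux]
  | cons t L ih =>
    intro i
    simp only [List.map_cons, eAux, ih, List.sum_cons]
    have h : (t + 1) * 2 ^ (t + 1 - 1) + i * 2 ^ (t + 1)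
        = 2 * (t * 2 ^ (t - 1) + i * 2 ^ t) + 2 ^ t := by
      cases t with
      | zero => norm_num; omega
      | succ s =>
        simp only [Nat.add_sub_cancel, pow_succ]
        ring
    omega

lemma eAux_append_zero (L : List ℕ) : ∀ i : ℕ,
    eAux i (L ++ [0]) = eAux i L + (i + L.length) := by
  induction L with
  | nil => intro i; simp [eAux]
  | cons t L ih =>
    intro i
    simp only [List.cons_append, eAux, List.append_eq, ih, List.length_cons]
    omega

lemma sum_expList (g : ℕ) : ((expList g).map (2 ^ ·)).sum = g := by
  induction g using Nat.strong_induction_on with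
  | _ g ih =>
    match g, Nat.even_or_odd g with
    | 0, _ =>
      have h0 : expList 0 = [] := expList_eq 0 [] (List.Pairwise.nil) (by simp)
      simp [h0]
    | g, Or.inl ⟨h, hh⟩ =>
      have hg : g = 2 * h := by omega
      subst hg
      rcases Nat.eq_zero_or_pos h with rfl | hpos
      · have h0 : expList 0 = [] := expList_eq 0 [] (List.Pairwise.nil) (by simp)
        simp [h0]
      · rw [expList_two_mul, List.map_map]
        have : ((2 ^ ·) ∘ (· + 1)) = fun t => 2 * 2 ^ t := by
          funext t
          show 2 ^ (t + 1) = 2 * 2 ^ t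
          rw [pow_succ, Nat.mul_comm]
        rw [this, List.sum_map_mul_left, ih h (by omega)]
    | g, Or.inr ⟨h, hh⟩ =>
      have hg : g = 2 * h + 1 := by omega
      subst hg
      rw [expList_two_mul_add_one, List.map_append, List.sum_append, List.map_map]
      have : ((2 ^ ·) ∘ (· + 1)) = fun t => 2 * 2 ^ t := by
        funext t
        show 2 ^ (t + 1) = 2 * 2 ^ t
        rw [pow_succ, Nat.mul_comm]
      rw [this, List.sum_map_mul_left, ih h (by omega)]
      simp [mul_comm]

lemma eHL_two_mul (g : ℕ) : eHL (2 * g) = 2 * eHL g + g := by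
  rw [eHL_eq_eAux, eHL_eq_eAux, expList_two_mul, eAux_map_succ, sum_expList]

lemma eHL_two_mul_add_one (g : ℕ) :
    eHL (2 * g + 1) = eHL (2 * g) + (expList g).length := by
  rw [eHL_eq_eAux, eHL_eq_eAux, expList_two_mul_add_one, eAux_append_zero,
    expList_two_mul, eAux_map_succ, sum_expList, List.length_map]
  omega

lemma eHL_succ_aux (g : ℕ) : eHL (g + 1) = eHL g + (expList g).length := by
  induction g using Nat.strong_induction_on with
  | _ g ih =>
    match g, Nat.even_or_odd g with
    | g, Or.inl ⟨h, hh⟩ =>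
      have hg : g = 2 * h := by omega
      subst hg
      have hlen : (expList (2 * h)).length = (expList h).length := by
        rw [expList_two_mul, List.length_map]
      rw [eHL_two_mul_add_one, hlen]
    | g, Or.inr ⟨h, hh⟩ =>
      have hg : g = 2 * h + 1 := by omega
      subst hg
      have h1 : 2 * h + 1 + 1 = 2 * (h + 1) := by ring
      rw [h1, eHL_two_mul, ih h (by omega), eHL_two_mul_add_one, eHL_two_mul,
        expList_two_mul_add_one, List.length_append, List.length_map]
      simp
      omega

/-- `e (g+1) = e g + s + 1`, where `s + 1` is the number of `1`-bits of `g`,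
i.e. the length of the binary expansion `g = Σ_{i=0}^{s} 2^(t_i)`. -/
theorem eHL_succ (g : ℕ) (hg : 0 < g) :
    eHL (g + 1) = eHL g + (expList g).length := by
  exact eHL_succ_aux g
end

section
/- Let e(g) = Σ_{i=0}^{s} t_i·2^{t_i−1} + Σ_{i=0}^{s} i·2^{t_i} for the binary expansion g = Σ 2^{t_i}. Then for every positive integer g, e(g+1) − e(g) equals the number of ones in the binary representation of g, i.e., the Hamming weight (popcount) of g. -/
/-- popcount -/
def pc (n : ℕ) : ℕ := (Nat.bits n).count true

lemma pc_zero : pc 0 = 0 := by simp [pc]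

lemma pc_bit1 (n : ℕ) : pc (2 * n + 1) = pc n + 1 := by
  simp [pc, Nat.bit1_bits]

lemma pc_bit0 (n : ℕ) (hn : n ≠ 0) : pc (2 * n) = pc n := by
  simp [pc, Nat.bit0_bits n hn]

lemma pc_two_pow_add (t : ℕ) : ∀ n < 2 ^ t, pc (2 ^ t + n) = pc n + 1 := by
  induction t with
  | zero =>
    intro n hn
    interval_cases n
    simp [pc, Nat.bits]
  | succ t ih =>
    intro n hn
    have hq : n / 2 < 2 ^ t := by
      have := Nat.pow_succ 2 t ▸ hn
      omega
    have hdecomp : n = 2 * (n / 2) + n % 2 := (Nat.div_add_mod n 2).symm ▸ by omega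
    have h2 : 2 ^ (t + 1) + n = 2 * (2 ^ t + n / 2) + n % 2 := by
      rw [Nat.pow_succ]; omega
    have hne : 2 ^ t + n / 2 ≠ 0 := by positivity
    rcases Nat.mod_two_eq_zero_or_one n with hm | hm
    · rw [h2, hm, Nat.add_zero, pc_bit0 _ hne, ih _ hq]
      rcases Nat.eq_zero_or_pos (n / 2) with h0 | h0
      · have hn0 : n = 0 := by omega
        rw [h0, hn0, pc_zero]
      · have hn0 : n = 2 * (n / 2) := by omega
        conv_rhs => rw [hn0, pc_bit0 _ (by omega)]
    · rw [h2, hm, pc_bit1, ih _ hq]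
      have hn0 : n = 2 * (n / 2) + 1 := by omega
      conv_rhs => rw [hn0, pc_bit1]

lemma sum_range_add (f : ℕ → ℕ) (a b : ℕ) :
    ∑ n ∈ Finset.range (a + b), f n
      = ∑ n ∈ Finset.range a, f n + ∑ n ∈ Finset.range b, f (a + n) := by
  induction b with
  | zero => simp
  | succ b ih => rw [← Nat.add_assoc, Finset.sum_range_succ, ih, Finset.sum_range_succ]; omega

lemma sum_pc_two_pow (t : ℕ) :
    ∑ n ∈ Finset.range (2 ^ t), pc n = t * 2 ^ (t - 1) := by
  induction t with
  | zero => simp [pc_zero]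
  | succ t ih =>
    have : (2 : ℕ) ^ (t + 1) = 2 ^ t + 2 ^ t := by rw [Nat.pow_succ]; omega
    rw [this, sum_range_add, ih]
    have h2 : ∑ n ∈ Finset.range (2 ^ t), pc (2 ^ t + n)
        = ∑ n ∈ Finset.range (2 ^ t), (pc n + 1) :=
      Finset.sum_congr rfl fun n hn => pc_two_pow_add t n (Finset.mem_range.1 hn)
    rw [h2, Finset.sum_add_distrib, ih]
    simp only [Finset.sum_const, Finset.card_range, smul_eq_mul, mul_one]
    rcases t with _ | s
    · norm_num
    · rw [Nat.add_sub_cancel, Nat.succ_sub_one, pow_succ]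
      ring

lemma sort_insert_max {t : ℕ} {S : Finset ℕ} (h : ∀ b ∈ S, b < t) :
    (insert t S).sort (· ≤ ·) = S.sort (· ≤ ·) ++ [t] := by
  have ht : t ∉ S := fun hm => lt_irrefl t (h t hm)
  have hperm : List.Perm ((insert t S).sort (· ≤ ·)) (S.sort (· ≤ ·) ++ [t]) := by
    have h1 : List.Perm ((insert t S).sort (· ≤ ·)) (t :: S.sort (· ≤ ·)) := by
      rw [← Multiset.coe_eq_coe, ← Multiset.cons_coe, Finset.sort_eq, Finset.sort_eq,
        Finset.insert_val_of_notMem ht]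
    exact h1.trans (List.perm_append_singleton t _).symm
  have hs2 : List.Pairwise (· ≤ ·) (S.sort (· ≤ ·) ++ [t]) := by
    refine List.pairwise_append.2 ⟨Finset.pairwise_sort _ _, List.pairwise_singleton _ t, ?_⟩
    intro x hx y hy
    rw [List.mem_singleton] at hy
    subst hy
    exact (h x ((Finset.mem_sort _).1 hx)).le
  exact List.Perm.eq_of_pairwise' (Finset.pairwise_sort _ _) hs2 hperm

lemma expList_decomp {t r : ℕ} (hr : r < 2 ^ t) :
    expList (2 ^ t + r) = t :: expList r := by
  have hset : (Finset.range (2 ^ t + r + 1)).filter (fun k => (2 ^ t + r).testBit k)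
      = insert t ((Finset.range (r + 1)).filter (fun k => r.testBit k)) := by
    ext k
    simp only [Finset.mem_filter, Finset.mem_range, Finset.mem_insert]
    constructor
    · rintro ⟨hk, htb⟩
      by_cases hkt : k = t
      · exact Or.inl hkt
      · rcases Nat.lt_or_ge k t with hlt | hge
        · right
          rw [Nat.testBit_two_pow_add_gt hlt] at htb
          exact ⟨by have := Nat.ge_two_pow_of_testBit htb
                    have := Nat.lt_two_pow_self (n := k); omega, htb⟩
        · exfalso
          have hklt : t < k := lt_of_le_of_ne hge (Ne.symm hkt)
          have : 2 ^ t + r < 2 ^ k := by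
            calc 2 ^ t + r < 2 ^ t + 2 ^ t := by omega
            _ = 2 ^ (t + 1) := by rw [Nat.pow_succ]; omega
            _ ≤ 2 ^ k := Nat.pow_le_pow_right (by norm_num) hklt
          rw [Nat.testBit_lt_two_pow this] at htb
          exact Bool.false_ne_true htb
    · rintro (rfl | ⟨hk, htb⟩)
      · refine ⟨by have := Nat.lt_two_pow_self (n := k); omega, ?_⟩
        rw [Nat.testBit_two_pow_add_eq, Nat.testBit_lt_two_pow hr]
        rfl
      · have hkt : k < t := by
          by_contra hge
          have : r < 2 ^ k := lt_of_lt_of_le hr (Nat.pow_le_pow_right (by norm_num) (by omega))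
          rw [Nat.testBit_lt_two_pow this] at htb
          exact Bool.false_ne_true htb
        refine ⟨by have := Nat.lt_two_pow_self (n := t); omega, ?_⟩
        rw [Nat.testBit_two_pow_add_gt hkt]
        exact htb
  have hmax : ∀ b ∈ (Finset.range (r + 1)).filter (fun k => r.testBit k), b < t := by
    intro b hb
    simp only [Finset.mem_filter] at hb
    have h1 : 2 ^ b ≤ r := Nat.ge_two_pow_of_testBit hb.2
    by_contra hge
    have : 2 ^ t ≤ 2 ^ b := Nat.pow_le_pow_right (by norm_num) (by omega)
    omega
  rw [expList, hset, sort_insert_max hmax, List.reverse_append]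
  rfl

/-- sum of enumFrom-weighted terms -/
def eS (n : ℕ) (L : List ℕ) : ℕ :=
  ((L.zipIdx n).map (fun p => p.1 * 2 ^ (p.1 - 1) + p.2 * 2 ^ p.1)).sum

lemma eS_cons (n a : ℕ) (L : List ℕ) :
    eS n (a :: L) = a * 2 ^ (a - 1) + n * 2 ^ a + eS (n + 1) L := by
  simp [eS, List.zipIdx_cons]

lemma eS_succ (L : List ℕ) : ∀ n, eS (n + 1) L = eS n L + (L.map (2 ^ ·)).sum := by
  induction L with
  | nil => intro n; simp [eS]
  | cons a L ih =>
    intro n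
    rw [eS_cons, eS_cons, ih (n + 1), ih n, List.map_cons, List.sum_cons]
    ring

lemma eHL_eq_eS (g : ℕ) : eHL g = eS 0 (expList g) := rfl

lemma eHL_key : ∀ g : ℕ, eHL g = ∑ n ∈ Finset.range g, pc n
    ∧ ((expList g).map (2 ^ ·)).sum = g := by
  intro g
  induction g using Nat.strong_induction_on with
  | _ g ih =>
    rcases Nat.eq_zero_or_pos g with rfl | hg
    · constructor <;> simp [eHL, expList_zero]
    · set t := Nat.log 2 g with ht
      have h1 : 2 ^ t ≤ g := Nat.pow_log_le_self 2 hg.ne'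
      have h2 : g < 2 ^ (t + 1) := Nat.lt_pow_succ_log_self (by norm_num) g
      set r := g - 2 ^ t with hrdef
      have hgr : g = 2 ^ t + r := by omega
      have hr : r < 2 ^ t := by rw [Nat.pow_succ] at h2; omega
      have hrg : r < g := by have := Nat.two_pow_pos t; omega
      obtain ⟨ihr1, ihr2⟩ := ih r hrg
      have hdec : expList g = t :: expList r := by rw [hgr]; exact expList_decomp hr
      constructor
      · rw [eHL_eq_eS, hdec]
        have : eS 0 (t :: expList r)
            = t * 2 ^ (t - 1) + eS 1 (expList r) := by
          simp [eS, List.zipIdx_cons]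
        rw [this, eS_succ, ihr2, ← eHL_eq_eS, ihr1]
        rw [hgr, sum_range_add, sum_pc_two_pow]
        have : ∑ n ∈ Finset.range r, pc (2 ^ t + n)
            = ∑ n ∈ Finset.range r, (pc n + 1) :=
          Finset.sum_congr rfl fun n hn =>
            pc_two_pow_add t n (lt_trans (Finset.mem_range.1 hn) hr)
        rw [this, Finset.sum_add_distrib]
        simp only [Finset.sum_const, Finset.card_range, smul_eq_mul, mul_one]
        try omega
      · rw [hdec, List.map_cons, List.sum_cons]
        rw [ihr2]
        omega

/-- `e (g+1) − e g` equals the Hamming weight (popcount) of `g`, the number of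
ones in the binary representation of `g`. -/
theorem eHL_succ_popcount (g : ℕ) (hg : 0 < g) :
    eHL (g + 1) = eHL g + (Nat.bits g).count true := by
  have h1 := (eHL_key (g + 1)).1
  have h2 := (eHL_key g).1
  rw [Finset.sum_range_succ] at h1
  rw [h1, h2]
  rfl
end
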